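/- For every nonzero complex number z, |sin z / z| ≤ 1.72 · e^{|Im z|} / (1 + |z|). -/

import Mathlib

open Real
set_option maxHeartbeats 1000000

private lemma mono_aux {f f' : ℝ → ℝ} (hd : ∀ t, HasDerivAt f (f' t) t)
    (h0 : ∀ t, 0 < t → 0 ≤ f' t) {x : ℝ} (hx : 0 ≤ x) : f 0 ≤ f x := by
  have hm : MonotoneOn f (Set.Ici (0:ℝ)) := by
    apply monotoneOn_of_deriv_nonneg (convex_Ici 0)
    · exact fun t _ => (hd t).continuousAt.continuousWithinAt
    · exact fun t _ => ((hd t).differentiableAt).differentiableWithinAt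
    · intro t ht
      rw [(hd t).deriv]
      exact h0 t (by simpa [interior_Ici] using ht)
  exact hm Set.self_mem_Ici hx hx

private lemma sin_ge_cubic {x : ℝ} (hx : 0 ≤ x) : x - x^3/6 ≤ Real.sin x := by
  have h := mono_aux (f := fun t => Real.sin t - (t - t^3/6))
    (f' := fun t => Real.cos t - (1 - t^2/2)) ?_ ?_ hx
  · simpa using h
  · intro t
    have h3 := ((hasDerivAt_pow 3 t).div_const 6)
    have h4 := (hasDerivAt_id t).sub h3
    have h2 : HasDerivAt (fun t : ℝ => t - t^3/6) (1 - t^2/2) t := by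
      refine h4.congr_deriv ?_
      push_cast; ring
    exact (Real.hasDerivAt_sin t).sub h2
  · intro t _
    have := Real.one_sub_sq_div_two_le_cos (x := t)
    linarith

private lemma cos_le_quartic {x : ℝ} (hx : 0 ≤ x) : Real.cos x ≤ 1 - x^2/2 + x^4/24 := by
  have h := mono_aux (f := fun t => (1 - t^2/2 + t^4/24) - Real.cos t)
    (f' := fun t => Real.sin t - (t - t^3/6)) ?_ ?_ hx
  · simpa using h
  · intro t
    have h3 := (((hasDerivAt_pow 2 t).div_const 2).const_sub 1).add ((hasDerivAt_pow 4 t).div_const 24)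
    have h2 : HasDerivAt (fun t : ℝ => 1 - t^2/2 + t^4/24) (t^3/6 - t) t := by
      refine h3.congr_deriv ?_
      push_cast; ring
    have h5 := h2.sub (Real.hasDerivAt_cos t)
    refine h5.congr_deriv ?_
    push_cast; ring
  · intro t ht
    have := sin_ge_cubic (le_of_lt ht)
    linarith

private lemma sin_le_quintic {x : ℝ} (hx : 0 ≤ x) : Real.sin x ≤ x - x^3/6 + x^5/120 := by
  have h := mono_aux (f := fun t => (t - t^3/6 + t^5/120) - Real.sin t)
    (f' := fun t => (1 - t^2/2 + t^4/24) - Real.cos t) ?_ ?_ hx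
  · simpa using h
  · intro t
    have h3 := (((hasDerivAt_id t).sub ((hasDerivAt_pow 3 t).div_const 6)).add ((hasDerivAt_pow 5 t).div_const 120))
    have h2 : HasDerivAt (fun t : ℝ => t - t^3/6 + t^5/120) (1 - t^2/2 + t^4/24) t := by
      refine h3.congr_deriv ?_
      push_cast; ring
    exact h2.sub (Real.hasDerivAt_sin t)
  · intro t ht
    have := cos_le_quartic (le_of_lt ht)
    linarith

private lemma abs_sin_sq (z : ℂ) :
    ‖Complex.sin z‖^2 = Real.sin z.re ^2 + Real.sinh z.im ^2 := by
  have h : Complex.sin z = Complex.ofReal (Real.sin z.re * Real.cosh z.im)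
      + Complex.ofReal (Real.cos z.re * Real.sinh z.im) * Complex.I := by
    rw [Complex.sin_eq]; push_cast; ring
  rw [h, Complex.sq_norm, Complex.normSq_add_mul_I]
  nlinarith [Real.cosh_sq z.im, Real.sin_sq_add_cos_sq z.re]

private lemma sinh_le_quartic {x : ℝ} (hx : 0 ≤ x) (hx1 : x ≤ 1) :
    Real.sinh x ≤ x + x^3/6 + x^4 * (5/96) := by
  have hb1 := Real.exp_bound (x := x) (by rw [abs_of_nonneg hx]; exact hx1) (n := 4) (by norm_num)
  have hb2 := Real.exp_bound (x := -x) (by rw [abs_neg, abs_of_nonneg hx]; exact hx1) (n := 4) (by norm_num)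
  rw [Real.sinh_eq]
  rw [abs_of_nonneg hx] at hb1
  rw [abs_neg, abs_of_nonneg hx] at hb2
  simp [Finset.sum_range_succ, Nat.factorial] at hb1 hb2
  rw [abs_le] at hb1 hb2
  norm_num at hb1 hb2 ⊢
  nlinarith [hb1.1, hb1.2, hb2.1, hb2.2]

private lemma sq_le_sq_imp {x y : ℝ} (hx : 0 ≤ x) (hy : 0 ≤ y) (h : x^2 ≤ y^2) :
    x ≤ y := by nlinarith

private lemma polyL1 {r s : ℝ} (h0 : 0 ≤ r) (h2 : r ≤ 1.39)
    (h3 : s ≤ r - r^3/6 + r^5/120) : (1+r) * s ≤ 1.72 * r := by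
  have h4 : (1+r) * s ≤ (1+r) * (r - r^3/6 + r^5/120) :=
    mul_le_mul_of_nonneg_left h3 (by linarith)
  have h5 : (1+r) * (r - r^3/6 + r^5/120) ≤ 1.72 * r := by
    nlinarith [sq_nonneg (r - 1.22), mul_nonneg h0 h0,
      mul_nonneg (mul_nonneg h0 h0) h0, sq_nonneg (r*(r-1.22)),
      mul_nonneg h0 (by linarith : (0:ℝ) ≤ 1.39 - r),
      mul_nonneg (mul_nonneg h0 h0) (by linarith : (0:ℝ) ≤ 1.39 - r)]
  linarith

private lemma polySinLB {r s : ℝ} (h1 : 0.72 ≤ r) (h2 : r ≤ 1.39)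
    (h3 : r - r^3/6 ≤ s) : 0.62 ≤ s := by
  nlinarith [mul_nonneg (mul_nonneg (by linarith : (0:ℝ) ≤ r - 0.72)
    (by linarith : (0:ℝ) ≤ 1.39 - r)) (by linarith : (0:ℝ) ≤ r + 2.11)]

private lemma polyCosh {t E : ℝ} (h0 : 0.63 ≤ t) (hE : (1+t/3)^3 ≤ E) :
    (1+t)*(E^2+1) ≤ 3.44*(t*E^2) := by
  have hs : (0:ℝ) ≤ t - 0.63 := by linarith
  have hkey : 1 + t ≤ (1+t/3)^6 * (2.44*t - 1) := by
    nlinarith [pow_nonneg hs 2, pow_nonneg hs 3, pow_nonneg hs 4, pow_nonneg hs 5,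
      pow_nonneg hs 6, pow_nonneg hs 7]
  have h6 : (1 + t/3)^6 ≤ E^2 := by nlinarith [pow_le_pow_left₀ (by positivity) hE 2]
  nlinarith [hkey, h6, mul_le_mul_of_nonneg_right h6 (by linarith : (0:ℝ) ≤ 2.44*t-1)]

private lemma polySinh11 {t s : ℝ} (h0 : 0 ≤ t) (h1 : t ≤ 0.63)
    (h2 : s ≤ t + t^3/6 + t^4*(5/96)) : s ≤ 1.1 * t := by
  nlinarith [mul_nonneg h0 h0, mul_nonneg (mul_nonneg h0 h0) h0]

private lemma polySinhE {t s : ℝ} (h0 : 0 ≤ t) (h1 : t ≤ 0.63)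
    (h2 : s ≤ t + t^3/6 + t^4*(5/96)) : s ≤ t * (1 + t) := by
  nlinarith [mul_nonneg h0 h0, mul_nonneg (mul_nonneg h0 h0) h0]

theorem abs_sin_div_le (z : ℂ) (hz : z ≠ 0) :
    ‖Complex.sin z / z‖ ≤ 1.72 * Real.exp |z.im| / (1 + ‖z‖) := by
  set r := ‖z‖ with hrdef
  set a := z.re
  set b := z.im
  set t := |b| with htdef
  set E := Real.exp t with hEdef
  set A := ‖Complex.sin z‖ with hAdef
  have hpr : 0 < ‖z‖ := norm_pos_iff.mpr hz
  have him : |z.im| ≤ ‖z‖ := Complex.abs_im_le_norm z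
  have hre : |z.re| ≤ ‖z‖ := Complex.abs_re_le_norm z
  have hgoal : ‖Complex.sin z / z‖ = A / r := by
    rw [norm_div, ← hrdef, ← hAdef]
  have hr : 0 < r := by rw [hrdef]; exact hpr
  have hbr : t ≤ r := by rw [htdef, hrdef]; exact him
  have ht0 : 0 ≤ t := abs_nonneg b
  have hE1 : 1 ≤ E := Real.one_le_exp ht0
  have hE0 : 0 < E := lt_of_lt_of_le one_pos hE1
  have hA0 : 0 ≤ A := norm_nonneg _
  have hid : A^2 = Real.sin a ^2 + Real.sinh t ^2 := by
    rw [hAdef, abs_sin_sq z]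
    rcases abs_cases b with ⟨h1, _⟩ | ⟨h1, _⟩ <;> rw [htdef, h1]
    simp [Real.sinh_neg, a, b]
  have hr2 : r^2 = a^2 + b^2 := by
    rw [hrdef, Complex.sq_norm, Complex.normSq_apply]; ring
  have hre2 : |a| ≤ r := by rw [hrdef]; exact hre
  have hb2t : b^2 = t^2 := by rw [htdef, sq_abs]
  clear_value r a b t E A
  have hAcosh : A ≤ Real.cosh t := by
    have h1 : A^2 ≤ Real.cosh t^2 := by
      linarith [hid, Real.cosh_sq t, Real.sin_sq_le_one a]
    exact sq_le_sq_imp hA0 (le_of_lt (Real.cosh_pos t)) h1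
  -- reduce goal to linear form
  rw [hgoal]
  rw [div_le_div_iff₀ hr (by linarith)]
  show A * (1 + r) ≤ 1.72 * E * r
  -- case A : large r
  rcases le_or_gt 1 (0.72 * r) with hbig | hsmall
  · have hcoshE : Real.cosh t ≤ E := by
      rw [Real.cosh_eq, hEdef]
      have : Real.exp (-t) ≤ Real.exp t := Real.exp_le_exp.2 (by linarith)
      linarith
    have hAE : A ≤ E := hAcosh.trans hcoshE
    have h1 : 1 + r ≤ 1.72 * r := by linarith
    calc A * (1+r) ≤ E * (1+r) := mul_le_mul_of_nonneg_right hAE (by linarith)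
      _ ≤ E * (1.72*r) := mul_le_mul_of_nonneg_left h1 (le_of_lt hE0)
      _ = 1.72 * E * r := by ring
  rcases le_or_gt 0.63 t with hI | hIlt
  · -- case I : large |Im|
    have hEcube : (1 + t/3)^3 ≤ E := by
      have h1 : 1 + t/3 ≤ Real.exp (t/3) := by
        have := Real.add_one_le_exp (t/3); linarith
      have h2 : Real.exp (t/3) ^ 3 = E := by
        rw [hEdef, ← Real.exp_nat_mul]
        congr 1
        push_cast; ring
      calc (1 + t/3)^3 ≤ Real.exp (t/3)^3 := pow_le_pow_left₀ (by linarith) h1 3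
        _ = E := h2
    have h7 : (1+t)*(E^2+1) ≤ 3.44*(t*E^2) := polyCosh hI hEcube
    have hinv : Real.exp (-t) * E = 1 := by
      rw [hEdef, ← Real.exp_add]; simp
    have hch : Real.cosh t * (2*E) = E^2 + 1 := by
      rw [Real.cosh_eq, ← hEdef]
      linear_combination hinv
    have hscal2 : (Real.cosh t * (1+t)) * (2*E) ≤ (1.72*t*E) * (2*E) := by
      calc (Real.cosh t * (1+t)) * (2*E) = (E^2+1)*(1+t) := by rw [← hch]; ring
        _ ≤ 3.44*(t*E^2) := by nlinarith [h7]
        _ = (1.72*t*E)*(2*E) := by ring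
    have hscal : Real.cosh t * (1+t) ≤ 1.72*t*E :=
      le_of_mul_le_mul_right hscal2 (by positivity)
    have h9 : t * (1 + r) ≤ r * (1 + t) := by
      have : t * (1+r) - r * (1+t) = t - r := by ring
      linarith [hbr]
    have h8 : (Real.cosh t * (1 + r)) * (1 + t) ≤ (1.72 * E * r) * (1 + t) := by
      have h10 := mul_le_mul_of_nonneg_right hscal (by linarith : (0:ℝ) ≤ 1 + r)
      have h11 := mul_le_mul_of_nonneg_left h9 (by positivity : (0:ℝ) ≤ 1.72 * E)
      have e1 : Real.cosh t * (1+t) * (1+r) = Real.cosh t * (1+r) * (1+t) := by ring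
      have e2 : 1.72*t*E*(1+r) = 1.72*E*(t*(1+r)) := by ring
      have e3 : 1.72*E*(r*(1+t)) = 1.72*E*r*(1+t) := by ring
      linarith [h10, h11]
    have h12 : Real.cosh t * (1 + r) ≤ 1.72 * E * r :=
      le_of_mul_le_mul_right h8 (by linarith)
    calc A * (1+r) ≤ Real.cosh t * (1+r) := mul_le_mul_of_nonneg_right hAcosh (by linarith)
      _ ≤ 1.72 * E * r := h12
  -- now t < 0.63
  have hEt : 1 + t ≤ E := by have := Real.add_one_le_exp t; linarith
  have hsq : A^2 * (1+r)^2 ≤ (1.72 * E * r)^2 → A * (1 + r) ≤ 1.72 * E * r := by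
    intro hs
    have h1 : (A*(1+r))^2 ≤ (1.72*E*r)^2 := by
      calc (A*(1+r))^2 = A^2*(1+r)^2 := by ring
        _ ≤ (1.72*E*r)^2 := hs
    exact sq_le_sq_imp (mul_nonneg hA0 (by linarith : (0:ℝ) ≤ 1 + r))
      (by positivity) h1
  apply hsq
  rcases le_or_gt r 0.72 with hII | hIII
  · -- case II : small r
    have hsa : Real.sin a ^2 ≤ a^2 := Real.sin_sq_le_sq
    have hsb : Real.sinh t ≤ t * E := by
      have h1 := polySinhE ht0 (by linarith) (sinh_le_quartic ht0 (by linarith))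
      have h2 := mul_le_mul_of_nonneg_left hEt ht0
      have e1 : t * (1+t) = t + t*t := by ring
      linarith [h1, h2]
    have hsb2 : Real.sinh t ^2 ≤ t^2 * E^2 := by
      have h1 := mul_le_mul hsb hsb (Real.sinh_nonneg_iff.2 ht0)
        (mul_nonneg ht0 (le_of_lt hE0))
      calc Real.sinh t ^2 = Real.sinh t * Real.sinh t := sq (Real.sinh t) ▸ (sq (Real.sinh t)).symm ▸ by ring
        _ ≤ (t*E) * (t*E) := h1
        _ = t^2 * E^2 := by ring
    have hA2 : A^2 ≤ E^2 * r^2 := by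
      have h1 : (0:ℝ) ≤ (E^2 - 1) * a^2 :=
        mul_nonneg (by nlinarith [hE1]) (sq_nonneg a)
      have h5 : E^2*r^2 = E^2*a^2 + E^2*t^2 := by rw [hr2, hb2t]; ring
      linarith [hid, hsa, hsb2, h5, h1]
    have h1 : (1+r)^2 ≤ 1.72^2 := by nlinarith [hr, hII]
    have h2 := mul_le_mul_of_nonneg_right hA2 (sq_nonneg (1+r))
    have h3 := mul_le_mul_of_nonneg_left h1 (mul_nonneg (sq_nonneg E) (sq_nonneg r))
    linarith [h2, h3]
  · -- case III : middle r
    have hr139 : r ≤ 1.39 := by nlinarith [hsmall]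
    have hpi2 : r ≤ Real.pi / 2 := by
      have := Real.pi_gt_three; linarith
    have hsinr_lb : 0.62 ≤ Real.sin r :=
      polySinLB (by linarith) hr139 (sin_ge_cubic (le_of_lt hr))
    have hsa : Real.sin a ^2 ≤ Real.sin r ^2 := by
      have haa : |a| ≤ r := hre2
      have h1 : Real.sin |a| ≤ Real.sin r :=
        Real.sin_le_sin_of_le_of_le_pi_div_two
          (by linarith [abs_nonneg a, Real.pi_gt_three]) hpi2 haa
      have h2 : 0 ≤ Real.sin |a| :=
        Real.sin_nonneg_of_nonneg_of_le_pi (abs_nonneg a)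
          (by linarith [Real.pi_gt_three])
      have h3 : Real.sin a ^2 = Real.sin |a| ^2 := by
        rcases abs_cases a with ⟨h4, _⟩ | ⟨h4, _⟩ <;> rw [h4]
        simp [Real.sin_neg]
      rw [h3]
      have h5 : 0 ≤ Real.sin r := by linarith [h1, h2]
      have := mul_le_mul h1 h1 h2 h5
      calc Real.sin |a| ^2 = Real.sin |a| * Real.sin |a| := by ring
        _ ≤ Real.sin r * Real.sin r := this
        _ = Real.sin r ^2 := by ring
    have hsb : Real.sinh t ≤ 1.1 * t :=
      polySinh11 ht0 (by linarith) (sinh_le_quartic ht0 (by linarith))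
    have hE2 : 1 + 2*t + t^2 ≤ E^2 := by
      have h1 := mul_le_mul hEt hEt (by linarith) (by linarith [hE0] : (0:ℝ) ≤ E)
      calc 1 + 2*t + t^2 = (1+t)*(1+t) := by ring
        _ ≤ E * E := h1
        _ = E^2 := by ring
    have hsinh2 : Real.sinh t ^2 ≤ (E^2 - 1) * Real.sin r ^2 := by
      have h1 : Real.sinh t ^2 ≤ 1.21 * t^2 := by
        have := mul_le_mul hsb hsb (Real.sinh_nonneg_iff.2 ht0) (by linarith : (0:ℝ) ≤ 1.1*t)
        calc Real.sinh t ^2 = Real.sinh t * Real.sinh t := by ring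
          _ ≤ (1.1*t) * (1.1*t) := this
          _ = 1.21 * t^2 := by ring
      have h3 : (0.3844:ℝ) ≤ Real.sin r ^2 := by
        have := mul_le_mul hsinr_lb hsinr_lb (by norm_num) (by linarith : (0:ℝ) ≤ Real.sin r)
        calc (0.3844:ℝ) = 0.62 * 0.62 := by norm_num
          _ ≤ Real.sin r * Real.sin r := this
          _ = Real.sin r ^2 := by ring
      have h4 : (0:ℝ) ≤ 2*t + t^2 := by positivity
      have h2 : (2*t + t^2) * 0.3844 ≤ (E^2 - 1) * Real.sin r ^2 :=
        mul_le_mul (by linarith) h3 (by norm_num) (by linarith)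
      have h6 : 1.21*t^2 ≤ (2*t + t^2) * 0.3844 := by
        have hl : 1.21 * t ≤ (2 + t) * 0.3844 := by linarith
        have := mul_le_mul_of_nonneg_left hl ht0
        calc 1.21*t^2 = t * (1.21 * t) := by ring
          _ ≤ t * ((2 + t) * 0.3844) := this
          _ = (2*t + t^2) * 0.3844 := by ring
      linarith
    have hA2 : A^2 ≤ E^2 * Real.sin r ^2 := by
      have : Real.sin r ^2 + (E^2 - 1) * Real.sin r ^2 = E^2 * Real.sin r ^2 := by ring
      linarith [hid, hsa, hsinh2]
    have hL1 : (1 + r) * Real.sin r ≤ 1.72 * r :=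
      polyL1 (le_of_lt hr) hr139 (sin_le_quintic (le_of_lt hr))
    have hL1sq : ((1 + r) * Real.sin r)^2 ≤ (1.72 * r)^2 := by
      have hnn : 0 ≤ (1 + r) * Real.sin r :=
        mul_nonneg (by linarith) (by linarith)
      have := mul_le_mul hL1 hL1 hnn (by linarith)
      calc ((1 + r) * Real.sin r)^2 = ((1+r)*Real.sin r) * ((1+r)*Real.sin r) := by ring
        _ ≤ (1.72*r) * (1.72*r) := this
        _ = (1.72*r)^2 := by ring
    have h2 := mul_le_mul_of_nonneg_right hA2 (sq_nonneg (1+r))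
    have h3 := mul_le_mul_of_nonneg_left hL1sq (sq_nonneg E)
    have e1 : E^2 * Real.sin r ^2 * (1+r)^2 = E^2 * ((1+r)*Real.sin r)^2 := by ring
    have e2 : E^2 * (1.72*r)^2 = (1.72*E*r)^2 := by ring
    linarith [h2, h3]
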